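/- The quotient of M by the cyclic A-submodule generated by the single element s₁ + s₂ is a free ℂ[t]-module with basis the images of s₁ and s₀. -/

import Mathlib

open MvPolynomial

noncomputable section

/-- The polynomial ring `ℂ[t,z₁,z₂,θ₁,θ₂]`:
variables `X 0 = t`, `X 1 = z₁`, `X 2 = z₂`, `X 3 = θ₁`, `X 4 = θ₂`. -/
abbrev P5 : Type := MvPolynomial (Fin 5) ℂ

/-- The ideal `(z₁z₂ + t², z₁θ₂ − tθ₁, z₂θ₁ + tθ₂, θ₁θ₂, θ₁², θ₂²)` of relations
of Deligne's miniversal deformation of the NS node. -/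
def nsIdeal : Ideal P5 :=
  Ideal.span {X 1 * X 2 + X 0 ^ 2, X 1 * X 4 - X 0 * X 3, X 2 * X 3 + X 0 * X 4,
    X 3 * X 4, X 3 ^ 2, X 4 ^ 2}

/-- The coordinate ring `A` of Deligne's miniversal deformation of the NS node. -/
abbrev ANode : Type := P5 ⧸ nsIdeal

/-- `t̄ ∈ A`. -/
def tb : ANode := Ideal.Quotient.mk nsIdeal (X 0)
/-- `z̄₁ ∈ A`. -/
def z1 : ANode := Ideal.Quotient.mk nsIdeal (X 1)
/-- `z̄₂ ∈ A`. -/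
def z2 : ANode := Ideal.Quotient.mk nsIdeal (X 2)
/-- `θ̄₁ ∈ A`. -/
def th1 : ANode := Ideal.Quotient.mk nsIdeal (X 3)
/-- `θ̄₂ ∈ A`. -/
def th2 : ANode := Ideal.Quotient.mk nsIdeal (X 4)

/-- `A` as a `ℂ[t]`-algebra via `t ↦ t̄`. -/
instance : Algebra (Polynomial ℂ) ANode := (Polynomial.aeval tb).toRingHom.toAlgebra


set_option synthInstance.maxHeartbeats 400000
set_option maxHeartbeats 1000000

/-- The standard generators of the free module `A³`. -/
def ee (i : Fin 3) : Fin 3 → ANode := Pi.single i 1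

/-- The relation vectors defining the local model `M` of the dualizing sheaf `ω_{X/S}`:
generators `s₁ = ee 0`, `s₂ = ee 1`, `s₀ = ee 2`; relations `z₁s₂ = ts₁`, `z₂s₁ = −ts₂`,
`θ₁s₂ = ts₀`, `θ₂s₁ = ts₀`, `z₁s₀ = θ₁s₁`, `z₂s₀ = −θ₂s₂`, `θ₁s₀ = 0`, `θ₂s₀ = 0`. -/
def omegaRels : Set (Fin 3 → ANode) :=
  { z1 • ee 1 - tb • ee 0,
    z2 • ee 0 + tb • ee 1,
    th1 • ee 1 - tb • ee 2,
    th2 • ee 0 - tb • ee 2,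
    z1 • ee 2 - th1 • ee 0,
    z2 • ee 2 + th2 • ee 1,
    th1 • ee 2,
    th2 • ee 2 }

/-- The submodule of relations. -/
def omegaRelMod : Submodule ANode (Fin 3 → ANode) := Submodule.span ANode omegaRels

/-- The local model `M` of the relative dualizing sheaf `ω_{X/S}`. -/
abbrev M : Type := (Fin 3 → ANode) ⧸ omegaRelMod

/-- The generators of `M`: `s 0 = s₁`, `s 1 = s₂`, `s 2 = s₀`. -/
def s (i : Fin 3) : M := Submodule.Quotient.mk (ee i)

/-- The cyclic submodule `A·(s₁ + s₂)` of `M` (local model of the image of the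
section `s = s₁ + s₂`). -/
def secSub : Submodule ANode M := Submodule.span ANode {s 0 + s 1}

/-- The claimed `ℂ[t]`-basis of `M/A·(s₁+s₂)`: the images of `s₁` and `s₀`. -/
def fhatBasis : Fin 2 → M ⧸ secSub :=
  ![Submodule.Quotient.mk (s 0), Submodule.Quotient.mk (s 2)]

set_option synthInstance.maxHeartbeats 1000000
set_option maxHeartbeats 4000000

abbrev DD : Type := DualNumber (Polynomial ℂ)

noncomputable def phi : P5 →ₐ[ℂ] DD :=
  MvPolynomial.aeval
    ![TrivSqZeroExt.inl Polynomial.X, -TrivSqZeroExt.inl Polynomial.X,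
      TrivSqZeroExt.inl Polynomial.X, -TrivSqZeroExt.inr Polynomial.X,
      TrivSqZeroExt.inr Polynomial.X]

lemma phi_X0 : phi (X 0) = TrivSqZeroExt.inl Polynomial.X := by simp [phi]
lemma phi_X1 : phi (X 1) = -TrivSqZeroExt.inl Polynomial.X := by simp [phi]
lemma phi_X2 : phi (X 2) = TrivSqZeroExt.inl Polynomial.X := by simp [phi]
lemma phi_X3 : phi (X 3) = -TrivSqZeroExt.inr Polynomial.X := by simp [phi]
lemma phi_X4 : phi (X 4) = TrivSqZeroExt.inr Polynomial.X := by simp [phi]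

lemma phi_g1 : phi (X 1 * X 2 + X 0 ^ 2) = 0 := by
  rw [map_add, map_mul, map_pow, phi_X0, phi_X1, phi_X2, neg_mul,
    TrivSqZeroExt.inl_mul_inl, sq, TrivSqZeroExt.inl_mul_inl]
  exact neg_add_cancel _
lemma phi_g2 : phi (X 1 * X 4 - X 0 * X 3) = 0 := by
  rw [map_sub, map_mul, map_mul, phi_X0, phi_X1, phi_X3, phi_X4, neg_mul, mul_neg]
  exact sub_self _
lemma phi_g3 : phi (X 2 * X 3 + X 0 * X 4) = 0 := by
  rw [map_add, map_mul, map_mul, phi_X0, phi_X2, phi_X3, phi_X4, mul_neg]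
  exact neg_add_cancel _
lemma phi_g4 : phi (X 3 * X 4) = 0 := by
  rw [map_mul, phi_X3, phi_X4, neg_mul, TrivSqZeroExt.inr_mul_inr, neg_zero]
lemma phi_g5 : phi (X 3 ^ 2) = 0 := by
  rw [map_pow, phi_X3, sq, neg_mul_neg, TrivSqZeroExt.inr_mul_inr]
lemma phi_g6 : phi (X 4 ^ 2) = 0 := by
  rw [map_pow, phi_X4, sq, TrivSqZeroExt.inr_mul_inr]

lemma phi_ker : ∀ a ∈ nsIdeal, phi.toRingHom a = 0 := by
  intro a ha
  have h : nsIdeal ≤ RingHom.ker phi.toRingHom := by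
    rw [nsIdeal, Ideal.span_le]
    rintro b (rfl|rfl|rfl|rfl|rfl|rfl) <;>
      simp only [SetLike.mem_coe, RingHom.mem_ker, AlgHom.toRingHom_eq_coe, RingHom.coe_coe,
        phi_g1, phi_g2, phi_g3, phi_g4, phi_g5, phi_g6]
  exact h ha

/-- `A → ℂ[t][ε]` induced by `phi`. -/
noncomputable def phib : ANode →+* DD := Ideal.Quotient.lift nsIdeal phi.toRingHom phi_ker

lemma phib_mk (p : P5) : phib (Ideal.Quotient.mk nsIdeal p) = phi p :=
  Ideal.Quotient.lift_mk _ _ _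

lemma phib_tb : phib tb = TrivSqZeroExt.inl Polynomial.X := by rw [tb, phib_mk, phi_X0]
lemma phib_z1 : phib z1 = -TrivSqZeroExt.inl Polynomial.X := by rw [z1, phib_mk, phi_X1]
lemma phib_z2 : phib z2 = TrivSqZeroExt.inl Polynomial.X := by rw [z2, phib_mk, phi_X2]
lemma phib_th1 : phib th1 = -TrivSqZeroExt.inr Polynomial.X := by rw [th1, phib_mk, phi_X3]
lemma phib_th2 : phib th2 = TrivSqZeroExt.inr Polynomial.X := by rw [th2, phib_mk, phi_X4]

noncomputable instance : Algebra ANode DD := phib.toAlgebra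

lemma smul_DD_def (a : ANode) (d : DD) : a • d = phib a * d := rfl

lemma algebraMap_poly_ANode (p : Polynomial ℂ) :
    algebraMap (Polynomial ℂ) ANode p = Polynomial.aeval tb p := rfl

instance : IsScalarTower (Polynomial ℂ) ANode DD := by
  refine IsScalarTower.of_algebraMap_eq fun p => ?_
  have h : (algebraMap (Polynomial ℂ) DD) =
      phib.comp ((Polynomial.aeval tb).toRingHom : Polynomial ℂ →+* ANode) := by
    apply Polynomial.ringHom_ext
    · intro a
      rw [RingHom.comp_apply]
      show algebraMap (Polynomial ℂ) DD (Polynomial.C a) =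
        phib ((Polynomial.aeval tb) (Polynomial.C a))
      rw [Polynomial.aeval_C]
      show _ = phib (Ideal.Quotient.mk nsIdeal (MvPolynomial.C a))
      rw [phib_mk]
      show TrivSqZeroExt.inl (Polynomial.C a) = phi (MvPolynomial.C a)
      simp [phi, TrivSqZeroExt.algebraMap_eq_inl']
    · rw [RingHom.comp_apply]
      show algebraMap (Polynomial ℂ) DD Polynomial.X =
        phib ((Polynomial.aeval tb) Polynomial.X)
      rw [Polynomial.aeval_X, phib_tb]
      rfl
  rw [h]
  rfl

/-- The `A`-linear evaluation `A³ → ℂ[t][ε]`, `s₁ ↦ 1`, `s₂ ↦ -1`, `s₀ ↦ ε`. -/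
noncomputable def F : (Fin 3 → ANode) →ₗ[ANode] DD where
  toFun v := v 0 • (1 : DD) - v 1 • (1 : DD) + v 2 • DualNumber.eps
  map_add' x y := by
    simp only [smul_DD_def, Pi.add_apply, map_add, add_mul]
    abel
  map_smul' a x := by
    simp only [smul_DD_def, Pi.smul_apply, smul_eq_mul, map_mul, mul_assoc, RingHom.id_apply,
      mul_sub, mul_add]

lemma F_ee0 : F (ee 0) = 1 := by
  show (1 : ANode) • (1 : DD) - (0 : ANode) • (1 : DD) + (0 : ANode) • DualNumber.eps = 1
  rw [smul_DD_def, smul_DD_def, smul_DD_def, map_one, one_mul, map_zero, zero_mul, zero_mul,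
    sub_zero, add_zero]
lemma F_ee1 : F (ee 1) = -1 := by
  show (0 : ANode) • (1 : DD) - (1 : ANode) • (1 : DD) + (0 : ANode) • DualNumber.eps = -1
  rw [smul_DD_def, smul_DD_def, smul_DD_def, map_one, one_mul, map_zero, zero_mul, zero_mul,
    zero_sub, add_zero]
lemma F_ee2 : F (ee 2) = DualNumber.eps := by
  show (0 : ANode) • (1 : DD) - (0 : ANode) • (1 : DD) + (1 : ANode) • DualNumber.eps = _
  rw [smul_DD_def, smul_DD_def, map_one, one_mul, map_zero, zero_mul, sub_zero, zero_add]

lemma eps_eq : (DualNumber.eps : DD) = TrivSqZeroExt.inr 1 := rfl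

lemma inl_mul_eps (r : Polynomial ℂ) :
    TrivSqZeroExt.inl r * (DualNumber.eps : DD) = TrivSqZeroExt.inr r := by
  rw [eps_eq, TrivSqZeroExt.inl_mul_inr, smul_eq_mul, mul_one]
lemma inr_mul_eps (r : Polynomial ℂ) :
    TrivSqZeroExt.inr r * (DualNumber.eps : DD) = 0 := by
  rw [eps_eq, TrivSqZeroExt.inr_mul_inr]

lemma hF : omegaRelMod ≤ LinearMap.ker F := by
  rw [omegaRelMod, Submodule.span_le]
  rintro v (rfl|rfl|rfl|rfl|rfl|rfl|rfl|rfl) <;>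
    simp only [SetLike.mem_coe, LinearMap.mem_ker, map_sub, map_add, map_smul,
      F_ee0, F_ee1, F_ee2, smul_DD_def,
      phib_tb, phib_z1, phib_z2, phib_th1, phib_th2,
      inl_mul_eps, inr_mul_eps, mul_one, mul_neg, neg_mul, neg_neg, neg_zero,
      sub_self, neg_add_cancel, add_neg_cancel, sub_neg_eq_add, zero_sub, zero_add, add_zero]

/-- Induced map on `M`. -/
noncomputable def Fbar : M →ₗ[ANode] DD := omegaRelMod.liftQ F hF

lemma Fbar_s (i : Fin 3) : Fbar (s i) = F (ee i) := rfl

lemma hFsec : secSub ≤ LinearMap.ker Fbar := by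
  rw [secSub, Submodule.span_le]
  rintro x (rfl : x = s 0 + s 1)
  simp [LinearMap.mem_ker, map_add, Fbar_s, F_ee0, F_ee1]

/-- Induced map on `M ⧸ secSub`. -/
noncomputable def G : (M ⧸ secSub) →ₗ[ANode] DD := secSub.liftQ Fbar hFsec

lemma G_b0 : G (fhatBasis 0) = 1 := by
  show Fbar (s 0) = 1
  rw [Fbar_s, F_ee0]
lemma G_b1 : G (fhatBasis 1) = DualNumber.eps := by
  show Fbar (s 2) = _
  rw [Fbar_s, F_ee2]

noncomputable def Gr : (M ⧸ secSub) →ₗ[Polynomial ℂ] DD := LinearMap.restrictScalars (Polynomial ℂ) G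

lemma indep_one_eps : LinearIndependent (Polynomial ℂ) (![1, DualNumber.eps] : Fin 2 → DD) := by
  rw [LinearIndependent.pair_iff]
  intro p q h
  constructor
  · have h1 := congrArg TrivSqZeroExt.fst h
    simpa using h1
  · have h2 := congrArg TrivSqZeroExt.snd h
    simpa using h2

lemma lin_indep : LinearIndependent (Polynomial ℂ) fhatBasis := by
  apply LinearIndependent.of_comp Gr
  have h : (⇑Gr ∘ fhatBasis) = ![1, DualNumber.eps] := by
    funext i
    fin_cases i
    · exact G_b0
    · exact G_b1
  rw [h]
  exact indep_one_eps

lemma fb0 : fhatBasis 0 = Submodule.Quotient.mk (s 0) := rfl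
lemma fb1 : fhatBasis 1 = Submodule.Quotient.mk (s 2) := rfl

lemma relM1 : z1 • s 1 = tb • s 0 := by
  show z1 • (Submodule.Quotient.mk (ee 1) : M) = tb • Submodule.Quotient.mk (ee 0)
  rw [← Submodule.Quotient.mk_smul, ← Submodule.Quotient.mk_smul]
  exact (Submodule.Quotient.eq _).mpr (Submodule.subset_span (Set.mem_insert _ _))

lemma relM2 : z2 • s 0 = -(tb • s 1) := by
  show z2 • (Submodule.Quotient.mk (ee 0) : M) = -(tb • Submodule.Quotient.mk (ee 1))
  rw [← Submodule.Quotient.mk_smul, ← Submodule.Quotient.mk_smul, ← Submodule.Quotient.mk_neg]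
  refine (Submodule.Quotient.eq _).mpr ?_
  have h : z2 • ee 0 - -(tb • ee 1) = z2 • ee 0 + tb • ee 1 := by abel
  rw [h]
  exact Submodule.subset_span (Set.mem_insert_of_mem _ (Set.mem_insert _ _))

lemma relM3 : th1 • s 1 = tb • s 2 := by
  show th1 • (Submodule.Quotient.mk (ee 1) : M) = tb • Submodule.Quotient.mk (ee 2)
  rw [← Submodule.Quotient.mk_smul, ← Submodule.Quotient.mk_smul]
  exact (Submodule.Quotient.eq _).mpr (Submodule.subset_span
    (Set.mem_insert_of_mem _ (Set.mem_insert_of_mem _ (Set.mem_insert _ _))))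

lemma relM4 : th2 • s 0 = tb • s 2 := by
  show th2 • (Submodule.Quotient.mk (ee 0) : M) = tb • Submodule.Quotient.mk (ee 2)
  rw [← Submodule.Quotient.mk_smul, ← Submodule.Quotient.mk_smul]
  exact (Submodule.Quotient.eq _).mpr (Submodule.subset_span
    (Set.mem_insert_of_mem _ (Set.mem_insert_of_mem _ (Set.mem_insert_of_mem _
      (Set.mem_insert _ _)))))

lemma relM5 : z1 • s 2 = th1 • s 0 := by
  show z1 • (Submodule.Quotient.mk (ee 2) : M) = th1 • Submodule.Quotient.mk (ee 0)
  rw [← Submodule.Quotient.mk_smul, ← Submodule.Quotient.mk_smul]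
  exact (Submodule.Quotient.eq _).mpr (Submodule.subset_span
    (Set.mem_insert_of_mem _ (Set.mem_insert_of_mem _ (Set.mem_insert_of_mem _
      (Set.mem_insert_of_mem _ (Set.mem_insert _ _))))))

lemma relM6 : z2 • s 2 = -(th2 • s 1) := by
  show z2 • (Submodule.Quotient.mk (ee 2) : M) = -(th2 • Submodule.Quotient.mk (ee 1))
  rw [← Submodule.Quotient.mk_smul, ← Submodule.Quotient.mk_smul, ← Submodule.Quotient.mk_neg]
  refine (Submodule.Quotient.eq _).mpr ?_
  have h : z2 • ee 2 - -(th2 • ee 1) = z2 • ee 2 + th2 • ee 1 := by abel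
  rw [h]
  exact Submodule.subset_span
    (Set.mem_insert_of_mem _ (Set.mem_insert_of_mem _ (Set.mem_insert_of_mem _
      (Set.mem_insert_of_mem _ (Set.mem_insert_of_mem _ (Set.mem_insert _ _))))))

lemma relM7 : th1 • s 2 = 0 := by
  show th1 • (Submodule.Quotient.mk (ee 2) : M) = 0
  rw [← Submodule.Quotient.mk_smul]
  refine (Submodule.Quotient.mk_eq_zero _).mpr (Submodule.subset_span ?_)
  exact Set.mem_insert_of_mem _ (Set.mem_insert_of_mem _ (Set.mem_insert_of_mem _
    (Set.mem_insert_of_mem _ (Set.mem_insert_of_mem _ (Set.mem_insert_of_mem _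
      (Set.mem_insert _ _))))))

lemma relM8 : th2 • s 2 = 0 := by
  show th2 • (Submodule.Quotient.mk (ee 2) : M) = 0
  rw [← Submodule.Quotient.mk_smul]
  refine (Submodule.Quotient.mk_eq_zero _).mpr (Submodule.subset_span ?_)
  exact Set.mem_insert_of_mem _ (Set.mem_insert_of_mem _ (Set.mem_insert_of_mem _
    (Set.mem_insert_of_mem _ (Set.mem_insert_of_mem _ (Set.mem_insert_of_mem _
      (Set.mem_insert_of_mem _ rfl))))))


lemma sneg (a : ANode) (x : M ⧸ secSub) : a • -x = -(a • x) := smul_neg a x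
lemma negsm (c : Polynomial ℂ) (x : M ⧸ secSub) : (-c) • x = -(c • x) := by
  rw [← algebraMap_smul ANode (-c) x, ← algebraMap_smul ANode c x, map_neg, neg_smul]
lemma zerosm (x : M ⧸ secSub) : (0 : Polynomial ℂ) • x = 0 := by
  rw [← algebraMap_smul ANode (0 : Polynomial ℂ) x, map_zero, zero_smul ANode x]
lemma mkq_smul (a : ANode) (x : M) :
    (Submodule.Quotient.mk (a • x) : M ⧸ secSub) = a • Submodule.Quotient.mk x :=
  Submodule.Quotient.mk_smul secSub a x
lemma mkq_add (x y : M) :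
    (Submodule.Quotient.mk (x + y) : M ⧸ secSub)
      = Submodule.Quotient.mk x + Submodule.Quotient.mk y :=
  Submodule.Quotient.mk_add secSub
lemma scomm (a : ANode) (c : Polynomial ℂ) (x : M ⧸ secSub) :
    a • c • x = c • a • x := by
  rw [← algebraMap_smul ANode c x, ← mul_smul, mul_comm, mul_smul, algebraMap_smul]

lemma mk_s1 : (Submodule.Quotient.mk (s 1) : M ⧸ secSub) = -fhatBasis 0 := by
  have hm : s 0 + s 1 ∈ secSub := Submodule.mem_span_singleton_self _
  have h0 : (Submodule.Quotient.mk (s 0 + s 1) : M ⧸ secSub) = 0 :=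
    (Submodule.Quotient.mk_eq_zero _).mpr hm
  rw [Submodule.Quotient.mk_add] at h0
  rw [fb0]
  exact eq_neg_of_add_eq_zero_right h0

lemma tb_alg : algebraMap (Polynomial ℂ) ANode Polynomial.X = tb := by
  show Polynomial.aeval tb Polynomial.X = tb
  exact Polynomial.aeval_X tb

lemma tb_smul (x : M ⧸ secSub) : tb • x = (Polynomial.X : Polynomial ℂ) • x := by
  rw [← tb_alg, algebraMap_smul]

lemma act_z1_b0 : z1 • fhatBasis 0 = (-(Polynomial.X : Polynomial ℂ)) • fhatBasis 0 := by
  calc z1 • fhatBasis 0 = -(z1 • Submodule.Quotient.mk (s 1)) := by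
        rw [mk_s1, sneg, neg_neg]
    _ = -(Submodule.Quotient.mk (z1 • s 1)) := by rw [Submodule.Quotient.mk_smul]
    _ = -(tb • fhatBasis 0) := by rw [relM1, Submodule.Quotient.mk_smul, fb0]
    _ = (-(Polynomial.X : Polynomial ℂ)) • fhatBasis 0 := by rw [tb_smul, ← negsm]

lemma act_z2_b0 : z2 • fhatBasis 0 = (Polynomial.X : Polynomial ℂ) • fhatBasis 0 := by
  calc z2 • fhatBasis 0 = Submodule.Quotient.mk (z2 • s 0) := by
        rw [fb0, Submodule.Quotient.mk_smul]
    _ = -(tb • Submodule.Quotient.mk (s 1)) := by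
        rw [relM2, Submodule.Quotient.mk_neg, Submodule.Quotient.mk_smul]
    _ = tb • fhatBasis 0 := by rw [mk_s1, sneg, neg_neg]
    _ = (Polynomial.X : Polynomial ℂ) • fhatBasis 0 := tb_smul _

lemma act_th1_b0 : th1 • fhatBasis 0 = (-(Polynomial.X : Polynomial ℂ)) • fhatBasis 1 := by
  calc th1 • fhatBasis 0 = -(th1 • Submodule.Quotient.mk (s 1)) := by
        rw [mk_s1, sneg, neg_neg]
    _ = -(Submodule.Quotient.mk (th1 • s 1)) := by rw [Submodule.Quotient.mk_smul]
    _ = -(tb • fhatBasis 1) := by rw [relM3, Submodule.Quotient.mk_smul, fb1]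
    _ = (-(Polynomial.X : Polynomial ℂ)) • fhatBasis 1 := by rw [tb_smul, ← negsm]

lemma act_th2_b0 : th2 • fhatBasis 0 = (Polynomial.X : Polynomial ℂ) • fhatBasis 1 := by
  calc th2 • fhatBasis 0 = Submodule.Quotient.mk (th2 • s 0) := by
        rw [fb0, Submodule.Quotient.mk_smul]
    _ = tb • fhatBasis 1 := by rw [relM4, Submodule.Quotient.mk_smul, fb1]
    _ = (Polynomial.X : Polynomial ℂ) • fhatBasis 1 := tb_smul _

lemma act_z1_b1 : z1 • fhatBasis 1 = (-(Polynomial.X : Polynomial ℂ)) • fhatBasis 1 := by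
  calc z1 • fhatBasis 1 = Submodule.Quotient.mk (z1 • s 2) := by
        rw [fb1, Submodule.Quotient.mk_smul]
    _ = th1 • fhatBasis 0 := by rw [relM5, Submodule.Quotient.mk_smul, fb0]
    _ = (-(Polynomial.X : Polynomial ℂ)) • fhatBasis 1 := act_th1_b0

lemma act_z2_b1 : z2 • fhatBasis 1 = (Polynomial.X : Polynomial ℂ) • fhatBasis 1 := by
  calc z2 • fhatBasis 1 = Submodule.Quotient.mk (z2 • s 2) := by
        rw [fb1, Submodule.Quotient.mk_smul]
    _ = -(th2 • Submodule.Quotient.mk (s 1)) := by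
        rw [relM6, Submodule.Quotient.mk_neg, Submodule.Quotient.mk_smul]
    _ = th2 • fhatBasis 0 := by rw [mk_s1, sneg, neg_neg]
    _ = (Polynomial.X : Polynomial ℂ) • fhatBasis 1 := act_th2_b0

lemma act_th1_b1 : th1 • fhatBasis 1 = (0 : Polynomial ℂ) • fhatBasis 1 := by
  rw [zerosm, fb1, ← mkq_smul, relM7, Submodule.Quotient.mk_zero]

lemma act_th2_b1 : th2 • fhatBasis 1 = (0 : Polynomial ℂ) • fhatBasis 1 := by
  rw [zerosm, fb1, ← mkq_smul, relM8, Submodule.Quotient.mk_zero]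

lemma act_X (i : Fin 5) (j : Fin 2) :
    ∃ (c : Polynomial ℂ) (j' : Fin 2),
      (Ideal.Quotient.mk nsIdeal (X i)) • fhatBasis j = c • fhatBasis j' := by
  fin_cases i <;> fin_cases j
  · exact ⟨Polynomial.X, 0, tb_smul _⟩
  · exact ⟨Polynomial.X, 1, tb_smul _⟩
  · exact ⟨-Polynomial.X, 0, act_z1_b0⟩
  · exact ⟨-Polynomial.X, 1, act_z1_b1⟩
  · exact ⟨Polynomial.X, 0, act_z2_b0⟩
  · exact ⟨Polynomial.X, 1, act_z2_b1⟩
  · exact ⟨-Polynomial.X, 1, act_th1_b0⟩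
  · exact ⟨0, 1, act_th1_b1⟩
  · exact ⟨Polynomial.X, 1, act_th2_b0⟩
  · exact ⟨0, 1, act_th2_b1⟩

lemma smul_b_mem (a : ANode) (j : Fin 2) :
    a • fhatBasis j ∈ Submodule.span (Polynomial ℂ) (Set.range fhatBasis) := by
  obtain ⟨p, rfl⟩ := Ideal.Quotient.mk_surjective a
  induction p using MvPolynomial.induction_on generalizing j with
  | C c =>
      have hc : (Ideal.Quotient.mk nsIdeal (C c) : ANode)
          = algebraMap (Polynomial ℂ) ANode (Polynomial.C c) := by
        show _ = Polynomial.aeval tb (Polynomial.C c)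
        rw [Polynomial.aeval_C]
        rfl
      rw [hc, algebraMap_smul]
      exact Submodule.smul_mem _ _ (Submodule.subset_span ⟨j, rfl⟩)
  | add p q hp hq =>
      rw [map_add, add_smul]
      exact add_mem (hp j) (hq j)
  | mul_X p i hp =>
      rw [map_mul, mul_smul (Ideal.Quotient.mk nsIdeal p : ANode) (Ideal.Quotient.mk nsIdeal (X i))
        (fhatBasis j)]
      obtain ⟨c, j', hc⟩ := act_X i j
      rw [hc, scomm]
      exact Submodule.smul_mem _ _ (hp j')

lemma span_top : Submodule.span (Polynomial ℂ) (Set.range fhatBasis) = ⊤ := by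
  rw [eq_top_iff]
  rintro x -
  obtain ⟨m, rfl⟩ := Submodule.Quotient.mk_surjective secSub x
  obtain ⟨v, rfl⟩ := Submodule.Quotient.mk_surjective omegaRelMod m
  have hv : v = v 0 • ee 0 + v 1 • ee 1 + v 2 • ee 2 := by
    funext i
    fin_cases i <;> simp [ee, Pi.single_apply]
  rw [hv]
  simp only [Submodule.Quotient.mk_add, Submodule.Quotient.mk_smul, mkq_add, mkq_smul]
  have h0 : (Submodule.Quotient.mk (Submodule.Quotient.mk (ee 0)) : M ⧸ secSub)
      = fhatBasis 0 := rfl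
  have h2 : (Submodule.Quotient.mk (Submodule.Quotient.mk (ee 2)) : M ⧸ secSub)
      = fhatBasis 1 := rfl
  have h1 : (Submodule.Quotient.mk (Submodule.Quotient.mk (ee 1)) : M ⧸ secSub)
      = -fhatBasis 0 := mk_s1
  rw [h0, h1, h2]
  have m0 := smul_b_mem (v 0) 0
  have m1 := smul_b_mem (v 1) 0
  have m2 := smul_b_mem (v 2) 1
  rw [sneg]
  exact add_mem (add_mem m0 (neg_mem m1)) m2


/-- the quotient of `M` by the cyclic submodule generated by `s₁ + s₂`
is a free `ℂ[t]`-module with basis the images of `s₁` and `s₀`. -/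
theorem omega_modulo_section_free :
    LinearIndependent (Polynomial ℂ) fhatBasis ∧
      Submodule.span (Polynomial ℂ) (Set.range fhatBasis) = ⊤ :=
  ⟨lin_indep, span_top⟩

end
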